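/- arXiv:1012.4852 — 3 statements merged into one kernel-verified Lean document; each statement's English description precedes it below -/
import Mathlib

section
/- Let M be a nonempty set, let (φ_j)_{j∈ℕ} be functions φ_j : M → ℂ with sup_{x∈M} |φ_j(x)| ≤ 1 for every j, let (k̃(j))_{j∈ℕ} be an absolutely summable sequence of real numbers, let J ⊆ ℕ be finite, and assume k̃(j) > 0 for all j ∉ J. Define k(x,y) := Σ_{j∈ℕ} k̃(j) φ_j(x) · conj(φ_j(y)). Then for every finite set Ξ ⊆ M and every α : Ξ → ℂ with Σ_{ξ∈Ξ} α_ξ φ_j(ξ) = 0 for all j ∈ J, the quadratic form Σ_{ξ,ζ∈Ξ} α_ξ · conj(α_ζ) · k(ξ,ζ) is a nonnegative real number; moreover it is strictly positive whenever there exists some j ∈ ℕ with Σ_{ξ∈Ξ} α_ξ φ_j(ξ) ≠ 0. -/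
open ComplexConjugate

/-- Conditional positive definiteness (Section 3.1): if `k(x,y) = Σ_j k̃(j) φ_j(x) conj(φ_j(y))`
with `k̃ ∈ ℓ¹`, uniformly bounded `φ_j`, and `k̃(j) > 0` for `j ∉ J`, then for any finite set of
centers `Ξ` and coefficients `α` satisfying the moment conditions over `J`, the quadratic form
`Σ_{ξ,ζ} α_ξ conj(α_ζ) k(ξ,ζ)` is a nonnegative real number, strictly positive whenever some
moment `Σ_ξ α_ξ φ_j(ξ)` is nonzero. -/
theorem kernel_conditionally_positive_definite
    {M : Type*} [Nonempty M]
    (φ : ℕ → M → ℂ) (hφ : ∀ j, ∀ x : M, ‖φ j x‖ ≤ 1)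
    (ktil : ℕ → ℝ) (hk : Summable fun j => |ktil j|)
    (J : Finset ℕ) (hpos : ∀ j ∉ J, 0 < ktil j)
    (k : M → M → ℂ)
    (hkdef : ∀ x y : M, k x y = ∑' j : ℕ, (ktil j : ℂ) * φ j x * conj (φ j y))
    (Ξ : Finset M) (α : M → ℂ)
    (hmom : ∀ j ∈ J, ∑ ξ ∈ Ξ, α ξ * φ j ξ = 0) :
    (0 ≤ (∑ ξ ∈ Ξ, ∑ ζ ∈ Ξ, α ξ * conj (α ζ) * k ξ ζ).re ∧
      (∑ ξ ∈ Ξ, ∑ ζ ∈ Ξ, α ξ * conj (α ζ) * k ξ ζ).im = 0) ∧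
    ((∃ j : ℕ, ∑ ξ ∈ Ξ, α ξ * φ j ξ ≠ 0) →
      0 < (∑ ξ ∈ Ξ, ∑ ζ ∈ Ξ, α ξ * conj (α ζ) * k ξ ζ).re) := by
  classical
  set S : ℕ → ℂ := fun j => ∑ ξ ∈ Ξ, α ξ * φ j ξ with hS
  -- basic summability of each term of the kernel expansion
  have hterm : ∀ (c : ℂ) (x y : M),
      Summable fun j => c * ((ktil j : ℂ) * φ j x * conj (φ j y)) := by
    intro c x y
    apply Summable.mul_left
    apply Summable.of_norm_bounded hk
    intro j
    simp only [norm_mul, Complex.norm_real, RCLike.norm_conj]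
    have h1 : |ktil j| * ‖φ j x‖ * ‖φ j y‖ ≤ |ktil j| * ‖φ j x‖ :=
      mul_le_of_le_one_right (mul_nonneg (abs_nonneg _) (norm_nonneg _)) (hφ j y)
    exact h1.trans (mul_le_of_le_one_right (abs_nonneg _) (hφ j x))
  -- the key identity
  have key : (∑ ξ ∈ Ξ, ∑ ζ ∈ Ξ, α ξ * conj (α ζ) * k ξ ζ)
      = ∑' j, (ktil j : ℂ) * (S j * conj (S j)) := by
    have step1 : (∑ ξ ∈ Ξ, ∑ ζ ∈ Ξ, α ξ * conj (α ζ) * k ξ ζ)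
        = ∑ ξ ∈ Ξ, ∑ ζ ∈ Ξ, ∑' j,
            (α ξ * conj (α ζ)) * ((ktil j : ℂ) * φ j ξ * conj (φ j ζ)) := by
      refine Finset.sum_congr rfl fun ξ _ => Finset.sum_congr rfl fun ζ _ => ?_
      rw [hkdef, ← tsum_mul_left]
    rw [step1]
    symm
    calc ∑' j, (ktil j : ℂ) * (S j * conj (S j))
        = ∑' j, ∑ ξ ∈ Ξ, ∑ ζ ∈ Ξ,
            (α ξ * conj (α ζ)) * ((ktil j : ℂ) * φ j ξ * conj (φ j ζ)) := by
          refine tsum_congr fun j => ?_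
          rw [hS]
          rw [map_sum, Finset.sum_mul_sum, Finset.mul_sum]
          refine Finset.sum_congr rfl fun ξ _ => ?_
          rw [Finset.mul_sum]
          refine Finset.sum_congr rfl fun ζ _ => ?_
          rw [map_mul]
          ring
      _ = ∑ ξ ∈ Ξ, ∑' j, ∑ ζ ∈ Ξ,
            (α ξ * conj (α ζ)) * ((ktil j : ℂ) * φ j ξ * conj (φ j ζ)) := by
          exact Summable.tsum_finsetSum fun ξ _ => summable_sum fun ζ _ => hterm _ ξ ζ
      _ = ∑ ξ ∈ Ξ, ∑ ζ ∈ Ξ, ∑' j,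
            (α ξ * conj (α ζ)) * ((ktil j : ℂ) * φ j ξ * conj (φ j ζ)) := by
          exact Finset.sum_congr rfl fun ξ _ =>
            Summable.tsum_finsetSum fun ζ _ => hterm _ ξ ζ
  -- real form
  set f : ℕ → ℝ := fun j => ktil j * Complex.normSq (S j) with hf
  have hSb : ∀ j, ‖S j‖ ≤ ∑ ξ ∈ Ξ, ‖α ξ‖ := by
    intro j
    refine (norm_sum_le _ _).trans ?_
    refine Finset.sum_le_sum fun ξ _ => ?_
    rw [norm_mul]
    exact mul_le_of_le_one_right (norm_nonneg _) (hφ j ξ)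
  have hfsum : Summable f := by
    apply Summable.of_norm_bounded (g := fun j => |ktil j| * (∑ ξ ∈ Ξ, ‖α ξ‖) ^ 2)
      (hk.mul_right _)
    intro j
    simp only [hf, Real.norm_eq_abs, abs_mul, abs_of_nonneg (Complex.normSq_nonneg _)]
    refine mul_le_mul_of_nonneg_left ?_ (abs_nonneg _)
    calc Complex.normSq (S j) = ‖S j‖ ^ 2 := by rw [← Complex.sq_norm]
      _ ≤ (∑ ξ ∈ Ξ, ‖α ξ‖) ^ 2 := pow_le_pow_left₀ (norm_nonneg _) (hSb j) 2
  have key2 : (∑ ξ ∈ Ξ, ∑ ζ ∈ Ξ, α ξ * conj (α ζ) * k ξ ζ) = ((∑' j, f j : ℝ) : ℂ) := by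
    rw [key, Complex.ofReal_tsum]
    refine tsum_congr fun j => ?_
    rw [Complex.mul_conj, hf]
    push_cast
    ring
  have hfnn : ∀ j, 0 ≤ f j := by
    intro j
    by_cases hj : j ∈ J
    · have : S j = 0 := hmom j hj
      simp [hf, this]
    · exact mul_nonneg (hpos j hj).le (Complex.normSq_nonneg _)
  refine ⟨⟨?_, ?_⟩, ?_⟩
  · rw [key2, Complex.ofReal_re]
    exact tsum_nonneg hfnn
  · rw [key2, Complex.ofReal_im]
  · rintro ⟨j, hj⟩
    have hjJ : j ∉ J := fun h => hj (hmom j h)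
    have hfj : 0 < f j := mul_pos (hpos j hjJ) (Complex.normSq_pos.mpr hj)
    rw [key2, Complex.ofReal_re]
    exact Summable.tsum_pos hfsum hfnn j hfj
end

section
/- Let d ≥ 1, let φ ∈ (0, π/2], R > 0, and set F(φ) := sin φ/(4(1 + sin φ)), r := 2RF(φ). Then for every x ∈ ℝ^d and every unit vector ξ ∈ ℝ^d, there exists a lattice point t ∈ (2r/√d)·ℤ^d such that the closed ball B(t, r) is contained in the cone C(x, ξ, φ, R). -/
open scoped RealInnerProductSpace

/-- The cone with vertex `x`, axis direction `ξ`, half-angle `φ` and radius `R`: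
`C(x, ξ, φ, R) = {x + λη : 0 ≤ λ ≤ R, ‖η‖ = 1, ⟨η, ξ⟩ ≥ cos φ}`. -/
def euclideanCone {d : ℕ} (x ξ : EuclideanSpace ℝ (Fin d)) (φ R : ℝ) :
    Set (EuclideanSpace ℝ (Fin d)) :=
  {y | ∃ lam : ℝ, ∃ η : EuclideanSpace ℝ (Fin d),
    0 ≤ lam ∧ lam ≤ R ∧ ‖η‖ = 1 ∧ Real.cos φ ≤ ⟪η, ξ⟫ ∧ y = x + lam • η}

/-- Scalar inequality at the heart of the cone argument. -/
lemma cone_key_ineq (lam s a u cphi mu : ℝ) (hlam : 0 < lam) (hs1 : s ≤ 1)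
    (hc0 : 0 ≤ cphi) (hc2 : cphi ^ 2 = 1 - s ^ 2) (ha : |a| ≤ u) (hw : u ≤ lam * s)
    (hmu0 : 0 ≤ mu) (hmu2 : mu ^ 2 = lam ^ 2 + 2 * lam * a + u ^ 2) :
    0 ≤ lam + a ∧ cphi * mu ≤ lam + a := by
  have hu0 : 0 ≤ u := le_trans (abs_nonneg a) ha
  have ha2 : a ^ 2 ≤ u ^ 2 := by nlinarith [sq_abs a, abs_nonneg a]
  have hla : 0 ≤ lam + a := by
    have h1 : -u ≤ a := neg_le_of_abs_le ha
    nlinarith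
  refine ⟨hla, ?_⟩
  have hs2 : (0:ℝ) ≤ 1 - s ^ 2 := by nlinarith [sq_nonneg cphi]
  have huu : u ^ 2 ≤ lam ^ 2 * s ^ 2 := by nlinarith
  have step1 : (cphi * mu) ^ 2 ≤ (lam + a) ^ 2 := by
    have hh : (cphi * mu) ^ 2 = (1 - s ^ 2) * (lam ^ 2 + 2 * lam * a + u ^ 2) := by
      rw [mul_pow, hc2, hmu2]
    rw [hh]
    nlinarith [sq_nonneg (a + lam * s ^ 2),
      mul_nonneg hs2 (by linarith : (0:ℝ) ≤ lam ^ 2 * s ^ 2 - u ^ 2)]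
  nlinarith [mul_nonneg hc0 hmu0]

/-- Key covering step in Duchon's construction (proof of Theorem A.3): with
`F(φ) = sin φ / (4(1 + sin φ))` and `r = 2 R F(φ)`, every cone of radius `R` and half-angle
`φ` contains a closed ball of radius `r` centered at a point of the lattice `(2r/√d)ℤ^d`. -/
theorem lattice_ball_in_cone
    {d : ℕ} (hd : 1 ≤ d) (φ R : ℝ) (hφ : φ ∈ Set.Ioc 0 (Real.pi / 2)) (hR : 0 < R)
    (F r : ℝ) (hF : F = Real.sin φ / (4 * (1 + Real.sin φ))) (hr : r = 2 * R * F)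
    (x ξ : EuclideanSpace ℝ (Fin d)) (hξ : ‖ξ‖ = 1) :
    ∃ t : EuclideanSpace ℝ (Fin d),
      (∃ z : Fin d → ℤ, ∀ i, t i = (2 * r / Real.sqrt d) * z i) ∧
      Metric.closedBall t r ⊆ euclideanCone x ξ φ R := by
  obtain ⟨hφ0, hφ2⟩ := hφ
  have hπ : φ < Real.pi := lt_of_le_of_lt hφ2 (by linarith [Real.pi_pos])
  have hs : 0 < Real.sin φ := Real.sin_pos_of_pos_of_lt_pi hφ0 hπ
  have hs1 : Real.sin φ ≤ 1 := Real.sin_le_one φ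
  have hcos0 : 0 ≤ Real.cos φ := Real.cos_nonneg_of_mem_Icc ⟨by linarith, hφ2⟩
  set s := Real.sin φ with hsdef
  have hrpos : 0 < r := by rw [hr, hF]; positivity
  have h1s : (0:ℝ) < 1 + s := by linarith
  set lam := R / (1 + s) with hlam
  have hlampos : 0 < lam := div_pos hR h1s
  have hls : lam * s = 2 * r := by
    rw [hlam, hr, hF]; field_simp; ring
  have hlR : lam * (1 + s) = R := by
    rw [hlam]; field_simp
  set c : EuclideanSpace ℝ (Fin d) := x + lam • ξ with hc
  have hdpos : (0:ℝ) < Real.sqrt d := Real.sqrt_pos.2 (by exact_mod_cast hd)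
  set h : ℝ := 2 * r / Real.sqrt d with hh
  have hhpos : 0 < h := by positivity
  set t : EuclideanSpace ℝ (Fin d) := WithLp.toLp 2 (fun i => h * (round (c i / h) : ℝ)) with ht
  refine ⟨t, ⟨fun i => round (c i / h), fun i => rfl⟩, ?_⟩
  -- distance from t to c is at most r
  have htc : ‖t - c‖ ≤ r := by
    have hcoord : ∀ i, ‖(t - c) i‖ ≤ h / 2 := by
      intro i
      have h0 : (t - c) i = h * (round (c i / h) : ℝ) - c i := rfl
      have heq : h * ((round (c i / h) : ℝ) - c i / h)
          = h * (round (c i / h) : ℝ) - c i := by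
        rw [mul_sub, mul_div_cancel₀ _ hhpos.ne']
      rw [h0, ← heq, Real.norm_eq_abs, abs_mul, abs_of_pos hhpos]
      have := abs_sub_round ((c i / h : ℝ))
      rw [abs_sub_comm] at this
      nlinarith
    have hnorm : ‖t - c‖ = Real.sqrt (∑ i, ‖(t - c) i‖ ^ 2) :=
      EuclideanSpace.norm_eq (t - c)
    rw [hnorm]
    have hsum : (∑ i, ‖(t - c) i‖ ^ 2) ≤ (d : ℝ) * (h / 2) ^ 2 := by
      calc (∑ i, ‖(t - c) i‖ ^ 2) ≤ ∑ _i : Fin d, (h / 2) ^ 2 :=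
            Finset.sum_le_sum fun i _ => by
              have := hcoord i
              nlinarith [norm_nonneg ((t - c) i)]
        _ = (d : ℝ) * (h / 2) ^ 2 := by simp [mul_comm]
    have hval : Real.sqrt ((d : ℝ) * (h / 2) ^ 2) = r := by
      rw [Real.sqrt_mul (by positivity), Real.sqrt_sq (by positivity), hh]
      field_simp
    calc Real.sqrt (∑ i, ‖(t - c) i‖ ^ 2) ≤ Real.sqrt ((d : ℝ) * (h / 2) ^ 2) :=
          Real.sqrt_le_sqrt hsum
      _ = r := hval
  -- main inclusion
  intro y hy
  rw [Metric.mem_closedBall, dist_eq_norm] at hy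
  set w : EuclideanSpace ℝ (Fin d) := y - c with hw
  have hwnorm : ‖w‖ ≤ lam * s := by
    have h2 : ‖w‖ ≤ ‖y - t‖ + ‖t - c‖ := by
      have h3 : w = (y - t) + (t - c) := by rw [hw]; abel
      rw [h3]; exact norm_add_le _ _
    linarith [hls]
  set a : ℝ := ⟪w, ξ⟫ with ha
  have habs : |a| ≤ ‖w‖ := by
    have := abs_real_inner_le_norm w ξ
    rwa [hξ, mul_one] at this
  set v : EuclideanSpace ℝ (Fin d) := y - x with hv
  have hvdecomp : v = lam • ξ + w := by
    rw [hv, hw, hc]; abel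
  have hinner : ⟪v, ξ⟫ = lam + a := by
    rw [hvdecomp, inner_add_left, real_inner_smul_left, real_inner_self_eq_norm_sq, hξ]
    ring
  have hv2 : ‖v‖ ^ 2 = lam ^ 2 + 2 * lam * a + ‖w‖ ^ 2 := by
    rw [hvdecomp, norm_add_sq_real, norm_smul, real_inner_smul_left, Real.norm_eq_abs,
      abs_of_pos hlampos, hξ, (real_inner_comm ξ w).symm]
    ring
  have hμR : ‖v‖ ≤ R := by
    have h1 : ‖v‖ ≤ lam + ‖w‖ := by
      rw [hvdecomp]
      calc ‖lam • ξ + w‖ ≤ ‖lam • ξ‖ + ‖w‖ := norm_add_le _ _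
        _ = lam + ‖w‖ := by
            rw [norm_smul, Real.norm_eq_abs, abs_of_pos hlampos, hξ, mul_one]
    have hexp : lam + lam * s = R := by rw [← hlR]; ring
    linarith
  have hc2 : Real.cos φ ^ 2 = 1 - s ^ 2 := Real.cos_sq' φ
  obtain ⟨hla, key⟩ := cone_key_ineq lam s a ‖w‖ (Real.cos φ) ‖v‖ hlampos hs1 hcos0 hc2
    habs hwnorm (norm_nonneg v) hv2
  by_cases hv0 : v = 0
  · refine ⟨0, ξ, le_refl _, hR.le, hξ, ?_, ?_⟩
    · rw [real_inner_self_eq_norm_sq, hξ]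
      simpa using Real.cos_le_one φ
    · have hyx : y = x := by rw [← sub_eq_zero]; exact hv0
      simp [hyx]
  · have hμpos : 0 < ‖v‖ := norm_pos_iff.2 hv0
    refine ⟨‖v‖, ‖v‖⁻¹ • v, norm_nonneg v, hμR, ?_, ?_, ?_⟩
    · rw [norm_smul, Real.norm_eq_abs, abs_of_pos (inv_pos.2 hμpos), inv_mul_cancel₀ hμpos.ne']
    · rw [real_inner_smul_left, hinner]
      rw [show (‖v‖)⁻¹ * (lam + a) = (lam + a) / ‖v‖ by ring, le_div_iff₀ hμpos]
      linarith
    · rw [smul_smul, mul_inv_cancel₀ hμpos.ne', one_smul, hv]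
      abel
end

section
/- Let d ≥ 1 and m ≥ 0 be integers. There is a constant C depending only on m and d such that the following holds: for every measurable set A ⊆ ℝ^d, every t > 0, every m-times continuously differentiable φ : ℝ^d → ℝ satisfying ‖D^i φ(x)‖ ≤ t^{−i} for all x ∈ A and all 0 ≤ i ≤ m, every m-times continuously differentiable u : ℝ^d → ℝ, and every 0 ≤ k ≤ m, one has ∫_A ‖D^k(φ·u)(x)‖² dx ≤ C · Σ_{j=0}^{k} t^{2(j−k)} ∫_A ‖D^j u(x)‖² dx. -/
open MeasureTheory
open scoped ENNReal NNReal

/-- Euclidean product-rule estimate at the core of Lemma 5.4 (product_rule): if the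
derivatives of the cutoff `φ` satisfy `‖D^i φ(x)‖ ≤ t^{−i}` on `A` for `0 ≤ i ≤ m`, then
for every `0 ≤ k ≤ m`,
`∫_A ‖D^k(φ·u)‖² ≤ C Σ_{j=0}^{k} t^{2(j−k)} ∫_A ‖D^j u‖²`, with `C = C(m, d)`. -/
theorem product_rule_estimate
    {d : ℕ} (hd : 1 ≤ d) (m : ℕ) :
    ∃ C : ℝ, 0 < C ∧ ∀ (A : Set (EuclideanSpace ℝ (Fin d))), MeasurableSet A →
      ∀ t : ℝ, 0 < t →
      ∀ φ u : EuclideanSpace ℝ (Fin d) → ℝ,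
      ContDiff ℝ (m : ℕ∞) φ → ContDiff ℝ (m : ℕ∞) u →
      (∀ x ∈ A, ∀ i ≤ m, ‖iteratedFDeriv ℝ i φ x‖ ≤ (t ^ i)⁻¹) →
      ∀ k ≤ m,
      (∫⁻ x in A, (‖iteratedFDeriv ℝ k (fun y => φ y * u y) x‖₊ : ℝ≥0∞) ^ 2)
        ≤ ENNReal.ofReal C * ∑ j ∈ Finset.range (k + 1),
            ENNReal.ofReal ((t ^ (2 * (k - j)))⁻¹) *
              ∫⁻ x in A, (‖iteratedFDeriv ℝ j u x‖₊ : ℝ≥0∞) ^ 2 := by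
  refine ⟨((m : ℝ) + 1) * 4 ^ m, by positivity, ?_⟩
  intro A hA t ht φ u hφ hu hbound k hk
  set C : ℝ := ((m : ℝ) + 1) * 4 ^ m with hC
  have hC0 : 0 ≤ C := by positivity
  -- measurability of the integrands
  have hmeas : ∀ j, j ≤ m → Measurable fun x : EuclideanSpace ℝ (Fin d) =>
      (‖iteratedFDeriv ℝ j u x‖₊ : ℝ≥0∞) ^ 2 := by
    intro j hj
    have hcont : Continuous fun x => iteratedFDeriv ℝ j u x :=
      hu.continuous_iteratedFDeriv (by exact_mod_cast hj)
    exact (hcont.nnnorm.measurable.coe_nnreal_ennreal).pow_const 2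
  -- pointwise real estimate
  have key : ∀ x ∈ A,
      ‖iteratedFDeriv ℝ k (fun y => φ y * u y) x‖ ^ 2 ≤
        C * ∑ j ∈ Finset.range (k + 1),
          (t ^ (2 * (k - j)))⁻¹ * ‖iteratedFDeriv ℝ j u x‖ ^ 2 := by
    intro x hx
    have h1 := norm_iteratedFDeriv_mul_le (𝕜 := ℝ) hφ hu x
      (n := k) (by exact_mod_cast hk)
    have h2 : ‖iteratedFDeriv ℝ k (fun y => φ y * u y) x‖ ≤
        ∑ i ∈ Finset.range (k + 1),
          (2 : ℝ) ^ m * ((t ^ i)⁻¹ * ‖iteratedFDeriv ℝ (k - i) u x‖) := by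
      refine h1.trans (Finset.sum_le_sum fun i hi => ?_)
      have hik : i ≤ k := Nat.lt_succ_iff.mp (Finset.mem_range.mp hi)
      have hchoose : (k.choose i : ℝ) ≤ 2 ^ m := by
        have h1 : k.choose i ≤ 2 ^ k := by
          rw [← Nat.sum_range_choose k]
          exact Finset.single_le_sum (fun j _ => Nat.zero_le _) hi
        have h2 : (2 : ℕ) ^ k ≤ 2 ^ m := Nat.pow_le_pow_right (by norm_num) hk
        exact_mod_cast h1.trans h2
      have hφb : ‖iteratedFDeriv ℝ i φ x‖ ≤ (t ^ i)⁻¹ :=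
        hbound x hx i (hik.trans hk)
      calc (k.choose i : ℝ) * ‖iteratedFDeriv ℝ i φ x‖ * ‖iteratedFDeriv ℝ (k - i) u x‖
          ≤ 2 ^ m * (t ^ i)⁻¹ * ‖iteratedFDeriv ℝ (k - i) u x‖ :=
            mul_le_mul (mul_le_mul hchoose hφb (norm_nonneg _) (by positivity))
              le_rfl (norm_nonneg _) (by positivity)
        _ = 2 ^ m * ((t ^ i)⁻¹ * ‖iteratedFDeriv ℝ (k - i) u x‖) := by ring
    have hnn : ∀ i, 0 ≤ (2 : ℝ) ^ m * ((t ^ i)⁻¹ * ‖iteratedFDeriv ℝ (k - i) u x‖) := by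
      intro i; positivity
    have h4 : ‖iteratedFDeriv ℝ k (fun y => φ y * u y) x‖ ^ 2 ≤
        (∑ i ∈ Finset.range (k + 1),
          (2 : ℝ) ^ m * ((t ^ i)⁻¹ * ‖iteratedFDeriv ℝ (k - i) u x‖)) ^ 2 := by
      have := pow_le_pow_left₀ (norm_nonneg _) h2 2
      exact this
    have h5 : (∑ i ∈ Finset.range (k + 1),
          (2 : ℝ) ^ m * ((t ^ i)⁻¹ * ‖iteratedFDeriv ℝ (k - i) u x‖)) ^ 2 ≤
        (k + 1 : ℕ) * ∑ i ∈ Finset.range (k + 1),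
          ((2 : ℝ) ^ m * ((t ^ i)⁻¹ * ‖iteratedFDeriv ℝ (k - i) u x‖)) ^ 2 := by
      have := sq_sum_le_card_mul_sum_sq
        (s := Finset.range (k + 1))
        (f := fun i => (2 : ℝ) ^ m * ((t ^ i)⁻¹ * ‖iteratedFDeriv ℝ (k - i) u x‖))
      simpa using this
    have h6 : ∑ i ∈ Finset.range (k + 1),
          ((2 : ℝ) ^ m * ((t ^ i)⁻¹ * ‖iteratedFDeriv ℝ (k - i) u x‖)) ^ 2 =
        4 ^ m * ∑ i ∈ Finset.range (k + 1),
          (t ^ (2 * i))⁻¹ * ‖iteratedFDeriv ℝ (k - i) u x‖ ^ 2 := by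
      rw [Finset.mul_sum]
      refine Finset.sum_congr rfl fun i _ => ?_
      have e1 : ((2 : ℝ) ^ m) ^ 2 = 4 ^ m := by
        rw [← pow_mul, mul_comm, pow_mul]; norm_num
      have e2 : (((t : ℝ) ^ i)⁻¹) ^ 2 = (t ^ (2 * i))⁻¹ := by
        rw [inv_pow, ← pow_mul, mul_comm i 2]
      rw [mul_pow, mul_pow, e1, e2]
    have h7 : ∑ i ∈ Finset.range (k + 1),
          (t ^ (2 * i))⁻¹ * ‖iteratedFDeriv ℝ (k - i) u x‖ ^ 2 =
        ∑ j ∈ Finset.range (k + 1),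
          (t ^ (2 * (k - j)))⁻¹ * ‖iteratedFDeriv ℝ j u x‖ ^ 2 := by
      have := Finset.sum_range_reflect
        (fun j => (t ^ (2 * (k - j)))⁻¹ * ‖iteratedFDeriv ℝ j u x‖ ^ 2) (k + 1)
      rw [← this]
      refine Finset.sum_congr rfl fun i hi => ?_
      have hik : i ≤ k := Nat.lt_succ_iff.mp (Finset.mem_range.mp hi)
      have e1 : k + 1 - 1 - i = k - i := by omega
      have e2 : k - (k - i) = i := by omega
      rw [e1, e2]
    calc ‖iteratedFDeriv ℝ k (fun y => φ y * u y) x‖ ^ 2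
        ≤ (k + 1 : ℕ) * ∑ i ∈ Finset.range (k + 1),
            ((2 : ℝ) ^ m * ((t ^ i)⁻¹ * ‖iteratedFDeriv ℝ (k - i) u x‖)) ^ 2 :=
          h4.trans h5
      _ = ((k : ℝ) + 1) * (4 ^ m * ∑ j ∈ Finset.range (k + 1),
            (t ^ (2 * (k - j)))⁻¹ * ‖iteratedFDeriv ℝ j u x‖ ^ 2) := by
          rw [h6, h7]; push_cast; ring
      _ ≤ C * ∑ j ∈ Finset.range (k + 1),
            (t ^ (2 * (k - j)))⁻¹ * ‖iteratedFDeriv ℝ j u x‖ ^ 2 := by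
          rw [hC, mul_assoc]
          have hkm : ((k : ℝ) + 1) ≤ (m : ℝ) + 1 := by
            exact_mod_cast Nat.succ_le_succ hk
          exact mul_le_mul_of_nonneg_right hkm (by positivity)
  -- pointwise ENNReal estimate
  have keyE : ∀ x ∈ A,
      (‖iteratedFDeriv ℝ k (fun y => φ y * u y) x‖₊ : ℝ≥0∞) ^ 2 ≤
        ENNReal.ofReal C * ∑ j ∈ Finset.range (k + 1),
          ENNReal.ofReal ((t ^ (2 * (k - j)))⁻¹) *
            (‖iteratedFDeriv ℝ j u x‖₊ : ℝ≥0∞) ^ 2 := by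
    intro x hx
    rw [show (‖iteratedFDeriv ℝ k (fun y => φ y * u y) x‖₊ : ℝ≥0∞) ^ 2
        = ENNReal.ofReal (‖iteratedFDeriv ℝ k (fun y => φ y * u y) x‖ ^ 2) by
      rw [ENNReal.ofReal_pow (norm_nonneg _), ofReal_norm, enorm_eq_nnnorm]]
    calc ENNReal.ofReal (‖iteratedFDeriv ℝ k (fun y => φ y * u y) x‖ ^ 2)
        ≤ ENNReal.ofReal (C * ∑ j ∈ Finset.range (k + 1),
            (t ^ (2 * (k - j)))⁻¹ * ‖iteratedFDeriv ℝ j u x‖ ^ 2) :=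
          ENNReal.ofReal_le_ofReal (key x hx)
      _ = ENNReal.ofReal C * ∑ j ∈ Finset.range (k + 1),
            ENNReal.ofReal ((t ^ (2 * (k - j)))⁻¹) *
              (‖iteratedFDeriv ℝ j u x‖₊ : ℝ≥0∞) ^ 2 := by
          rw [ENNReal.ofReal_mul hC0, ENNReal.ofReal_sum_of_nonneg
            (fun j _ => by positivity)]
          congr 1
          refine Finset.sum_congr rfl fun j _ => ?_
          rw [ENNReal.ofReal_mul (by positivity),
            ENNReal.ofReal_pow (norm_nonneg _), ofReal_norm, enorm_eq_nnnorm]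
  -- integrate
  calc (∫⁻ x in A, (‖iteratedFDeriv ℝ k (fun y => φ y * u y) x‖₊ : ℝ≥0∞) ^ 2)
      ≤ ∫⁻ x in A, (ENNReal.ofReal C * ∑ j ∈ Finset.range (k + 1),
          ENNReal.ofReal ((t ^ (2 * (k - j)))⁻¹) *
            (‖iteratedFDeriv ℝ j u x‖₊ : ℝ≥0∞) ^ 2) := by
        exact setLIntegral_mono' hA keyE
    _ = ENNReal.ofReal C * ∑ j ∈ Finset.range (k + 1),
          ENNReal.ofReal ((t ^ (2 * (k - j)))⁻¹) *
            ∫⁻ x in A, (‖iteratedFDeriv ℝ j u x‖₊ : ℝ≥0∞) ^ 2 := by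
        rw [lintegral_const_mul _ (by
          exact Finset.measurable_sum _ fun j hj =>
            (hmeas j ((Nat.lt_succ_iff.mp (Finset.mem_range.mp hj)).trans hk)).const_mul _)]
        congr 1
        rw [lintegral_finset_sum _ fun j hj =>
          (hmeas j ((Nat.lt_succ_iff.mp (Finset.mem_range.mp hj)).trans hk)).const_mul _]
        refine Finset.sum_congr rfl fun j hj => ?_
        rw [lintegral_const_mul _
          (hmeas j ((Nat.lt_succ_iff.mp (Finset.mem_range.mp hj)).trans hk))]
end
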